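/- Let A be a Dedekind domain with fraction field K, let E be a finite étale K-algebra, and consider sub-A-algebras B ⊆ E which are finitely generated as A-modules with K ⊗_A B ≅ E and which are stable under a fixed commuting family of K-algebra endomorphisms of E. Then among all such B there is a maximal one (containing all others). -/

import Mathlib

set_option synthInstance.maxHeartbeats 800000
set_option maxHeartbeats 1000000

/-- The integral closure of a Dedekind domain in a finite étale algebra over its fraction
field is a Noetherian module. First, the case of quotients by maximal ideals. -/
lemma stmt17_aux_quot (A : Type) [CommRing A] [IsDomain A] [IsDedekindDomain A]
    (K : Type) [Field K] [Algebra A K] [IsFractionRing A K]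
    (E : Type) [CommRing E] [Algebra K E] [Algebra A E] [IsScalarTower A K E]
    [Module.Finite K E] [Algebra.Etale K E] (I : Ideal E) (hI : I.IsMaximal) :
    IsNoetherian A ↥(integralClosure A (E ⧸ I)) := by
  haveI := hI
  letI : Field (E ⧸ I) := Ideal.Quotient.field I
  haveI : Module.Finite K (E ⧸ I) := Module.Finite.of_surjective
    (Ideal.Quotient.mkₐ K I).toLinearMap Ideal.Quotient.mk_surjective
  haveI : Algebra.IsSeparable K (E ⧸ I) := Algebra.FormallyUnramified.isSeparable K (E ⧸ I)
  exact IsIntegralClosure.isNoetherian A K (E ⧸ I) (integralClosure A (E ⧸ I))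

lemma stmt17_aux (A : Type) [CommRing A] [IsDomain A] [IsDedekindDomain A]
    (K : Type) [Field K] [Algebra A K] [IsFractionRing A K]
    (E : Type) [CommRing E] [Algebra K E] [Algebra A E] [IsScalarTower A K E]
    [Module.Finite K E] [Algebra.Etale K E] :
    IsNoetherian A ↥(Subalgebra.toSubmodule (integralClosure A E)) := by
  haveI : IsArtinianRing E := isArtinian_of_tower K inferInstance
  haveI : IsReduced E := Algebra.FormallyUnramified.isReduced_of_field K (A := E)
  haveI : Finite {I : Ideal E | I.IsMaximal} := (IsArtinianRing.setOfPred_isMaximal_finite E).to_subtype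
  haveI : ∀ I : {I : Ideal E | I.IsMaximal}, IsNoetherian A ↥(integralClosure A (E ⧸ I.1)) :=
    fun I => stmt17_aux_quot A K E I.1 I.2
  haveI : IsNoetherian A (∀ I : {I : Ideal E | I.IsMaximal}, ↥(integralClosure A (E ⧸ I.1))) :=
    isNoetherian_pi
  have hres : ∀ (I : {I : Ideal E | I.IsMaximal})
      (x : ↥(Subalgebra.toSubmodule (integralClosure A E))),
      Ideal.Quotient.mk I.1 (x : E) ∈ integralClosure A (E ⧸ I.1) := by
    intro I x
    exact (show IsIntegral A (x : E) from x.2).map (Ideal.Quotient.mkₐ A I.1)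
  let f : ↥(Subalgebra.toSubmodule (integralClosure A E)) →ₗ[A]
      (∀ I : {I : Ideal E | I.IsMaximal}, ↥(integralClosure A (E ⧸ I.1))) :=
    { toFun := fun x I => ⟨Ideal.Quotient.mk I.1 (x : E), hres I x⟩
      map_add' := by intro x y; funext I; ext; simp
      map_smul' := by
        intro a x; funext I; ext
        simp [Algebra.smul_def, ← IsScalarTower.algebraMap_apply] }
  have hfinj : Function.Injective f := by
    intro x y hxy
    ext
    have hnil : IsNilpotent ((x : E) - (y : E)) := by
      rw [nilpotent_iff_mem_prime]
      intro J hJ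
      have hJm : J.IsMaximal := (IsArtinianRing.isPrime_iff_isMaximal J).mp hJ
      have := congrFun hxy ⟨J, hJm⟩
      have h2 : Ideal.Quotient.mk J (x : E) = Ideal.Quotient.mk J (y : E) := by
        simpa [f, Subtype.ext_iff] using this
      exact Ideal.Quotient.eq.mp h2
    have := hnil.eq_zero
    exact sub_eq_zero.mp this
  exact isNoetherian_of_injective f hfinj

/-- Let `A` be a Dedekind domain with fraction field `K` and `E` a finite
étale `K`-algebra with a commuting family `Ψ` of `K`-algebra endomorphisms.  Among the integral
models of `E` — sub-`A`-algebras `B ⊆ E`, finite as `A`-modules, with `K·B = E`, stable under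
every `ψ ∈ Ψ` — there is (provided one exists) a maximal one containing all others. -/
theorem stmt17 (A : Type) [CommRing A] [IsDomain A] [IsDedekindDomain A]
    (K : Type) [Field K] [Algebra A K] [IsFractionRing A K]
    (E : Type) [CommRing E] [Algebra K E] [Algebra A E] [IsScalarTower A K E]
    [Module.Finite K E] [Algebra.Etale K E]
    (Ψ : Set (E →ₐ[K] E)) (hcomm : ∀ ψ ∈ Ψ, ∀ φ ∈ Ψ, ψ.comp φ = φ.comp ψ)
    (hexists : ∃ B : Subalgebra A E, (Subalgebra.toSubmodule B).FG ∧
        Submodule.span K (B : Set E) = ⊤ ∧ ∀ ψ ∈ Ψ, ∀ b ∈ B, ψ b ∈ B) :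
    ∃ Bmax : Subalgebra A E,
      ((Subalgebra.toSubmodule Bmax).FG ∧ Submodule.span K (Bmax : Set E) = ⊤ ∧
        ∀ ψ ∈ Ψ, ∀ b ∈ Bmax, ψ b ∈ Bmax) ∧
      ∀ B : Subalgebra A E,
        ((Subalgebra.toSubmodule B).FG ∧ Submodule.span K (B : Set E) = ⊤ ∧
          ∀ ψ ∈ Ψ, ∀ b ∈ B, ψ b ∈ B) → B ≤ Bmax := by
  classical
  set P : Subalgebra A E → Prop := fun B => (Subalgebra.toSubmodule B).FG ∧
      Submodule.span K (B : Set E) = ⊤ ∧ ∀ ψ ∈ Ψ, ∀ b ∈ B, ψ b ∈ B with hP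
  set O := integralClosure A E with hO
  -- every integral model is contained in the integral closure
  have hle : ∀ B, P B → Subalgebra.toSubmodule B ≤ Subalgebra.toSubmodule O := by
    intro B hB x hx
    exact IsIntegral.of_mem_of_fg B hB.1 x hx
  -- models are closed under sup
  have hsup : ∀ B₁ B₂, P B₁ → P B₂ → P (B₁ ⊔ B₂) := by
    intro B₁ B₂ h1 h2
    refine ⟨?_, ?_, ?_⟩
    · rw [← Subalgebra.mul_toSubmodule]
      exact h1.1.mul h2.1
    · rw [_root_.eq_top_iff, ← h1.2.1]
      exact Submodule.span_mono (SetLike.coe_subset_coe.mpr le_sup_left)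
    · intro ψ hψ b hb
      have hmap : B₁ ⊔ B₂ ≤ (B₁ ⊔ B₂).comap (ψ.restrictScalars A) := by
        refine sup_le ?_ ?_
        · intro a ha
          exact (le_sup_left : B₁ ≤ B₁ ⊔ B₂) (h1.2.2 ψ hψ a ha)
        · intro a ha
          exact (le_sup_right : B₂ ≤ B₁ ⊔ B₂) (h2.2.2 ψ hψ a ha)
      exact hmap hb
  haveI : IsNoetherian A ↥(Subalgebra.toSubmodule O) := stmt17_aux A K E
  have hwf := set_has_maximal_iff_noetherian.mpr
    (inferInstance : IsNoetherian A ↥(Subalgebra.toSubmodule O))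
  set m : Subalgebra A E → Submodule A ↥(Subalgebra.toSubmodule O) :=
    fun B => (Subalgebra.toSubmodule B).comap (Subalgebra.toSubmodule O).subtype with hm
  obtain ⟨B0, hB0⟩ := hexists
  obtain ⟨p, ⟨Bmax, hBmax, rfl⟩, hmax⟩ := hwf (m '' {B | P B}) ⟨m B0, B0, hB0, rfl⟩
  refine ⟨Bmax, hBmax, ?_⟩
  intro B hB
  have hsB : P (B ⊔ Bmax) := hsup B Bmax hB hBmax
  have h1 : m Bmax ≤ m (B ⊔ Bmax) :=
    Submodule.comap_mono (by exact_mod_cast le_sup_right (a := B) (b := Bmax))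
  have h3 : m Bmax = m (B ⊔ Bmax) := by
    by_contra hne
    exact hmax _ ⟨B ⊔ Bmax, hsB, rfl⟩ (h1.lt_of_ne hne)
  have hq : Subalgebra.toSubmodule (B ⊔ Bmax) ≤ Subalgebra.toSubmodule Bmax := by
    have := congrArg (Submodule.map (Subalgebra.toSubmodule O).subtype) h3
    rw [hm] at this
    simp only [Submodule.map_comap_subtype] at this
    rw [inf_eq_right.mpr (hle _ hBmax), inf_eq_right.mpr (hle _ hsB)] at this
    exact this.ge
  intro x hx
  exact hq (show x ∈ Subalgebra.toSubmodule (B ⊔ Bmax) from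
    (le_sup_left : B ≤ B ⊔ Bmax) hx)
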